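/- Let K be a compact Hausdorff space and (F_n)_{n∈ω} a sequence of pairwise disjoint closed subsets such that every cluster point of (F_n) lies in a closed set F disjoint from all F_n. Then there exists a sequence (U_n)_{n∈ω} of pairwise disjoint open subsets of K with F_n ⊆ U_n and closure(U_n) ∩ F = ∅ for all n. -/

import Mathlib

/-- `x` is a cluster point of the sequence of sets `(S n)`. -/
def IsClusterPointOfSets {K : Type} [TopologicalSpace K] (S : ℕ → Set K) (x : K) : Prop :=
  ∀ U ∈ nhds x, {n : ℕ | (S n ∩ U).Nonempty}.Infinite

/-- given pairwise disjoint closed sets `(F_n)` in a compact Hausdorff space,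
all disjoint from a closed set `F` containing every cluster point of `(F_n)`, there are
pairwise disjoint open sets `U_n ⊇ F_n` whose closures are disjoint from `F`. -/
theorem statement9 (K : Type) [TopologicalSpace K] [CompactSpace K] [T2Space K]
    (Fs : ℕ → Set K) (hFs : ∀ n, IsClosed (Fs n))
    (hdisj : ∀ n m, n ≠ m → Fs n ∩ Fs m = ∅)
    (F : Set K) (hF : IsClosed F) (hdisjF : ∀ n, Fs n ∩ F = ∅)
    (hcluster : ∀ x : K, IsClusterPointOfSets Fs x → x ∈ F) :
    ∃ U : ℕ → Set K,
      (∀ n, IsOpen (U n)) ∧ (∀ n, Fs n ⊆ U n) ∧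
      (∀ n m, n ≠ m → U n ∩ U m = ∅) ∧
      (∀ n, closure (U n) ∩ F = ∅) := by
  classical
  -- the "forbidden" closed set for index n
  set C : ℕ → Set K := fun n => F ∪ ⋃ m, ⋃ _ : m ≠ n, Fs m with hCdef
  have hFsC : ∀ n m, n ≠ m → Fs n ⊆ C m := by
    intro n m hnm x hx
    exact Or.inr (Set.mem_iUnion.2 ⟨n, Set.mem_iUnion.2 ⟨hnm, hx⟩⟩)
  have hFC : ∀ n, F ⊆ C n := fun n x hx => Or.inl hx
  have hFsCdisj : ∀ n, Fs n ∩ C n = ∅ := by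
    intro n
    rw [Set.eq_empty_iff_forall_notMem]
    rintro x ⟨hx1, hx2⟩
    rcases hx2 with h | h
    · exact (Set.eq_empty_iff_forall_notMem.1 (hdisjF n)) x ⟨hx1, h⟩
    · obtain ⟨m, hm⟩ := Set.mem_iUnion.1 h
      obtain ⟨hmn, hxm⟩ := Set.mem_iUnion.1 hm
      exact (Set.eq_empty_iff_forall_notMem.1 (hdisj n m (Ne.symm hmn))) x ⟨hx1, hxm⟩
  have hCclosed : ∀ n, IsClosed (C n) := by
    intro n
    apply isClosed_of_closure_subset
    intro x hx
    by_contra hxC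
    have hxF : x ∉ F := fun h => hxC (hFC n h)
    have hnotcl : ¬ IsClusterPointOfSets Fs x := fun h => hxF (hcluster x h)
    obtain ⟨U, hU, hfin⟩ : ∃ U ∈ nhds x, {m : ℕ | (Fs m ∩ U).Nonempty}.Finite := by
      by_contra h
      push_neg at h
      exact hnotcl fun U hU => h U hU
    set S : Set ℕ := {m : ℕ | (Fs m ∩ U).Nonempty} with hSdef
    set D : Set K := F ∪ ⋃ m ∈ S ∩ {m | m ≠ n}, Fs m with hDdef
    have hDclosed : IsClosed D :=
      hF.union (Set.Finite.isClosed_biUnion (hfin.inter_of_left _) fun m _ => hFs m)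
    have hsub : C n ∩ U ⊆ D := by
      rintro y ⟨hy1, hy2⟩
      rcases hy1 with h | h
      · exact Or.inl h
      · obtain ⟨m, hm⟩ := Set.mem_iUnion.1 h
        obtain ⟨hmn, hym⟩ := Set.mem_iUnion.1 hm
        exact Or.inr (Set.mem_biUnion ⟨⟨y, hym, hy2⟩, hmn⟩ hym)
    have hxD : x ∈ D := by
      have hcl : x ∈ closure (C n ∩ U) := by
        rw [mem_closure_iff_nhds] at hx ⊢
        intro t ht
        obtain ⟨y, hy1, hy2⟩ := hx (t ∩ U) (Filter.inter_mem ht hU)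
        exact ⟨y, hy1.1, hy2, hy1.2⟩
      exact closure_minimal hsub hDclosed hcl
    rcases hxD with h | h
    · exact hxF h
    · obtain ⟨m, hm, hxm⟩ := Set.mem_iUnion₂.1 h
      exact hxC (hFsC m n hm.2 hxm)
  -- recursive construction of the open sets
  let step : ∀ n : ℕ, (∀ k, k < n → Set K) → Set K := fun n ih =>
    if h : ∃ W, IsOpen W ∧ Fs n ⊆ W ∧
        closure W ∩ (C n ∪ ⋃ k, ⋃ h' : k < n, closure (ih k h')) = ∅ then
      h.choose
    else ∅
  let V : ℕ → Set K := fun n =>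
    WellFounded.fix (Nat.lt_wfRel.wf) step n
  have Veq : ∀ n, V n = step n (fun k _ => V k) := fun n =>
    WellFounded.fix_eq _ _ n
  have hV : ∀ n, IsOpen (V n) ∧ Fs n ⊆ V n ∧
      closure (V n) ∩ (C n ∪ ⋃ k, ⋃ _ : k < n, closure (V k)) = ∅ := by
    intro n
    induction n using Nat.strong_induction_on with
    | _ n IH =>
      set T : Set K := C n ∪ ⋃ k, ⋃ _ : k < n, closure (V k) with hTdef
      have hUnion : (⋃ k, ⋃ _ : k < n, closure (V k)) = ⋃ k ∈ Set.Iio n, closure (V k) := rfl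
      have hTclosed : IsClosed T := by
        apply (hCclosed n).union
        rw [hUnion]
        exact Set.Finite.isClosed_biUnion (Set.finite_Iio n) fun k _ => isClosed_closure
      have hdisjT : Fs n ∩ T = ∅ := by
        rw [Set.eq_empty_iff_forall_notMem]
        rintro x ⟨hx1, hx2⟩
        rcases hx2 with h | h
        · exact (Set.eq_empty_iff_forall_notMem.1 (hFsCdisj n)) x ⟨hx1, h⟩
        · obtain ⟨k, hk⟩ := Set.mem_iUnion.1 h
          obtain ⟨hkn, hxk⟩ := Set.mem_iUnion.1 hk
          have hclk := (IH k hkn).2.2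
          have hxCk : x ∈ C k := hFsC n k (Nat.ne_of_gt hkn) hx1
          exact (Set.eq_empty_iff_forall_notMem.1 hclk) x ⟨hxk, Or.inl hxCk⟩
      have hex : ∃ W, IsOpen W ∧ Fs n ⊆ W ∧ closure W ∩ T = ∅ := by
        obtain ⟨W, hWo, hsub, hclsub⟩ :=
          normal_exists_closure_subset (hFs n) hTclosed.isOpen_compl
            (fun x hx hxT => (Set.eq_empty_iff_forall_notMem.1 hdisjT) x ⟨hx, hxT⟩)
        refine ⟨W, hWo, hsub, ?_⟩
        rw [Set.eq_empty_iff_forall_notMem]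
        rintro x ⟨hx1, hx2⟩
        exact hclsub hx1 hx2
      have : V n = step n (fun k _ => V k) := Veq n
      rw [this]
      show IsOpen (step n fun k _ => V k) ∧ _ ∧ _
      simp only [step, dif_pos hex]
      split_ifs with h
      · exact h.choose_spec
      · exact absurd hex h
  refine ⟨V, fun n => (hV n).1, fun n => (hV n).2.1, ?_, ?_⟩
  · -- pairwise disjointness
    have key : ∀ a b, a < b → V b ∩ V a = ∅ := by
      intro a b hab
      rw [Set.eq_empty_iff_forall_notMem]
      rintro x ⟨hxb, hxa⟩
      have h3 := (hV b).2.2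
      refine (Set.eq_empty_iff_forall_notMem.1 h3) x ⟨subset_closure hxb, Or.inr ?_⟩
      exact Set.mem_iUnion.2 ⟨a, Set.mem_iUnion.2 ⟨hab, subset_closure hxa⟩⟩
    intro n m hnm
    rcases lt_or_gt_of_ne hnm with h | h
    · rw [Set.inter_comm]; exact key n m h
    · exact key m n h
  · -- closures disjoint from F
    intro n
    rw [Set.eq_empty_iff_forall_notMem]
    rintro x ⟨hx1, hx2⟩
    exact (Set.eq_empty_iff_forall_notMem.1 (hV n).2.2) x ⟨hx1, Or.inl (hFC n hx2)⟩
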